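/- Let M and N be nontrivial proper normal subgroups of a finite group G with M ≤ N, and assume M has a complement H in G (i.e., G = HM and H ∩ M = 1). Then C_G(x) ≤ N for every nonidentity x ∈ M if and only if every element g ∈ G \ N is conjugate in G to some element of H. -/

import Mathlib

open Finset

theorem centralizer_cond_iff_conjugate_into_H {G : Type*} [Group G] [Fintype G]
    (M N : Subgroup G) (hM : M.Normal) (hN : N.Normal)
    (hMbot : M ≠ ⊥) (hMtop : M ≠ ⊤) (hNbot : N ≠ ⊥) (hNtop : N ≠ ⊤) (hMN : M ≤ N)
    (H : Subgroup G) (hHM : ∀ g : G, ∃ h ∈ H, ∃ m ∈ M, g = h * m) (hHMcap : H ⊓ M = ⊥) :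
    (∀ x ∈ M, x ≠ 1 → Subgroup.centralizer {x} ≤ N) ↔
      (∀ g : G, g ∉ N → ∃ h ∈ H, IsConj g h) := by
  classical
  constructor
  · -- forward
    intro hcent g hg
    obtain ⟨h, hh, m, hm, rfl⟩ := hHM g
    have hhN : h ∉ N := fun hhN => hg (N.mul_mem hhN (hMN hm))
    have hMmem : ∀ m' : ↥M, h⁻¹ * (m' : G)⁻¹ * h * m' ∈ M := by
      intro m'
      have h1 : h⁻¹ * (m' : G)⁻¹ * (h⁻¹)⁻¹ ∈ M := hM.conj_mem _ (M.inv_mem m'.2) h⁻¹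
      have := M.mul_mem h1 m'.2
      simpa [mul_assoc] using this
    set f : ↥M → ↥M := fun m' => ⟨h⁻¹ * (m' : G)⁻¹ * h * m', hMmem m'⟩ with hf
    have hinj : Function.Injective f := by
      intro a b hab
      have hab' : h⁻¹ * (a : G)⁻¹ * h * a = h⁻¹ * (b : G)⁻¹ * h * b :=
        congrArg Subtype.val hab
      have e1 : (a : G)⁻¹ * h * a = (b : G)⁻¹ * h * b := by
        have := congrArg (fun z => h * z) hab'
        simpa [mul_assoc] using this
      have hc : ((b : G) * (a : G)⁻¹) * h = h * ((b : G) * (a : G)⁻¹) := by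
        calc (b : G) * (a : G)⁻¹ * h = (b:G) * ((a:G)⁻¹ * h * a) * (a:G)⁻¹ := by group
        _ = (b:G) * ((b:G)⁻¹ * h * b) * (a:G)⁻¹ := by rw [e1]
        _ = h * ((b:G) * (a:G)⁻¹) := by group
      have hcM : (b : G) * (a : G)⁻¹ ∈ M := M.mul_mem b.2 (M.inv_mem a.2)
      by_cases hone : (b : G) * (a : G)⁻¹ = 1
      · have : (b : G) = a := by
          have := congrArg (fun z => z * (a : G)) hone
          simpa [mul_assoc] using this
        exact Subtype.ext this.symm
      · exfalso
        apply hhN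
        apply hcent _ hcM hone
        rw [Subgroup.mem_centralizer_iff]
        intro z hz
        rw [Set.mem_singleton_iff] at hz
        subst hz
        exact hc
    have hsurj : Function.Surjective f := Finite.surjective_of_injective hinj
    obtain ⟨m', hm'⟩ := hsurj ⟨m, hm⟩
    have key : h⁻¹ * (m' : G)⁻¹ * h * m' = m := congrArg Subtype.val hm'
    refine ⟨h, hh, isConj_iff.mpr ⟨(m' : G), ?_⟩⟩
    show (m' : G) * (h * m) * (m' : G)⁻¹ = h
    rw [← key]; group
  · -- backward
    intro hconj x hxM hx1 g hgcent
    by_contra hgN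
    obtain ⟨h', hh'H, hcj⟩ := hconj g hgN
    obtain ⟨c, hch⟩ := isConj_iff.mp hcj
    have hgx : x * g = g * x := by
      rw [Subgroup.mem_centralizer_iff] at hgcent
      exact hgcent x rfl
    have hyM : c * x * c⁻¹ ∈ M := hM.conj_mem x hxM c
    set y := c * x * c⁻¹ with hy
    have hy1 : y ≠ 1 := by
      intro hcon
      apply hx1
      have := congrArg (fun z => c⁻¹ * z * c) hcon
      simp only [hy, mul_one, mul_assoc, inv_mul_cancel_left, inv_mul_cancel] at this
      simpa [← mul_assoc] using this
    have hcomm : y * h' * y⁻¹ = h' := by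
      rw [← hch, hy]
      calc (c * x * c⁻¹) * (c * g * c⁻¹) * (c * x * c⁻¹)⁻¹
          = c * (x * g * x⁻¹) * c⁻¹ := by group
        _ = c * g * c⁻¹ := by rw [hgx]; group
    have hh'N : h' ∉ N := by
      intro hn
      apply hgN
      have h2 : c⁻¹ * h' * (c⁻¹)⁻¹ ∈ N := hN.conj_mem h' hn c⁻¹
      have h3 : c⁻¹ * h' * (c⁻¹)⁻¹ = g := by rw [← hch]; group
      rwa [h3] at h2
    -- counting setup
    set m := (univ.filter (· ∈ M)).card with hmdef
    set hHc := (univ.filter (· ∈ H)).card with hHdef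
    set t := (univ.filter (fun z => z ∈ H ∧ z ∉ N)).card with htdef
    set s := (univ.filter (· ∉ N)).card with hsdef
    have hcard : ∀ (Q : G → Prop), (∀ (a : G), ∀ b ∈ M, (Q (a * b) ↔ Q a)) →
        (univ.filter Q).card = (univ.filter (fun z => z ∈ H ∧ Q z)).card * m := by
      intro Q hQ
      rw [hmdef, ← Finset.card_product]
      refine (Finset.card_bij (fun (p : G × G) _ => p.1 * p.2) ?_ ?_ ?_).symm
      · intro p hp
        simp only [Finset.mem_product, mem_filter, mem_univ, true_and] at hp ⊢
        exact (hQ p.1 p.2 hp.2).mpr hp.1.2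
      · intro p hp q hq heq
        simp only [Finset.mem_product, mem_filter, mem_univ, true_and] at hp hq
        have heq' : p.1 * p.2 = q.1 * q.2 := heq
        have h1 : q.1⁻¹ * p.1 = q.2 * p.2⁻¹ := by
          calc q.1⁻¹ * p.1 = q.1⁻¹ * (p.1 * p.2) * p.2⁻¹ := by group
          _ = q.1⁻¹ * (q.1 * q.2) * p.2⁻¹ := by rw [heq']
          _ = q.2 * p.2⁻¹ := by group
        have hH1 : q.1⁻¹ * p.1 ∈ H := H.mul_mem (H.inv_mem hq.1.1) hp.1.1
        have hM1 : q.1⁻¹ * p.1 ∈ M := h1 ▸ M.mul_mem hq.2 (M.inv_mem hp.2)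
        have : q.1⁻¹ * p.1 ∈ H ⊓ M := ⟨hH1, hM1⟩
        rw [hHMcap, Subgroup.mem_bot] at this
        have e1 : p.1 = q.1 := by
          have := congrArg (fun z => q.1 * z) this
          simpa using this
        have e2 : p.2 = q.2 := by
          rw [e1] at heq'
          exact mul_left_cancel heq'
        exact Prod.ext e1 e2
      · intro b hb
        simp only [mem_filter, mem_univ, true_and] at hb
        obtain ⟨h1, hh1, m1, hm1, rfl⟩ := hHM b
        refine ⟨(h1, m1), ?_, rfl⟩
        simp only [Finset.mem_product, mem_filter, mem_univ, true_and]
        exact ⟨⟨hh1, (hQ h1 m1 hm1).mp hb⟩, hm1⟩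
    have hG : Fintype.card G = hHc * m := by
      have := hcard (fun _ => True) (by simp)
      simpa [Finset.filter_true, hHdef, Finset.card_univ] using this
    have hs_tm : s = t * m := by
      rw [hsdef, htdef]
      have hval : ∀ (a : G), ∀ b ∈ M, ((fun z => z ∉ N) (a * b) ↔ (fun z => z ∉ N) a) := ?_
      · have h0 := hcard (fun z => z ∉ N) hval
        convert h0 using 3
        congr!
      intro a b hb
      have hiff : a * b ∈ N ↔ a ∈ N := by
        constructor
        · intro hab
          have := N.mul_mem hab (N.inv_mem (hMN hb))
          simpa [mul_assoc] using this
        · intro ha; exact N.mul_mem ha (hMN hb)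
      exact not_congr hiff
    set A : G → Finset G := fun g0 => univ.filter (fun a => g0 ∉ N ∧ a * g0 * a⁻¹ ∈ H)
      with hAdef
    set P : Finset (G × G) := univ.filter (fun p => p.1 ∉ N ∧ p.2 * p.1 * p.2⁻¹ ∈ H)
      with hPdef
    have hPsnd : P.card = Fintype.card G * t := by
      rw [Finset.card_eq_sum_card_fiberwise (f := Prod.snd) (t := univ)
        (fun x _ => mem_univ _)]
      have hfib : ∀ a : G, (P.filter (fun p => p.2 = a)).card = t := by
        intro a
        rw [htdef]
        apply Finset.card_bij (fun (p : G × G) _ => a * p.1 * a⁻¹)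
        · intro p hp
          simp only [hPdef, mem_filter, mem_univ, true_and] at hp
          obtain ⟨⟨hp1, hp2⟩, hpa⟩ := hp
          subst hpa
          simp only [mem_filter, mem_univ, true_and]
          refine ⟨hp2, ?_⟩
          intro hcon
          apply hp1
          have := hN.conj_mem _ hcon p.2⁻¹
          simpa [mul_assoc] using this
        · intro p hp q hq heq
          simp only [hPdef, mem_filter, mem_univ, true_and] at hp hq
          have e1 : p.1 = q.1 := by
            have := mul_right_cancel heq
            exact mul_left_cancel this
          exact Prod.ext e1 (hp.2.trans hq.2.symm)
        · intro z hz
          simp only [mem_filter, mem_univ, true_and] at hz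
          refine ⟨(a⁻¹ * z * a, a), ?_, by group⟩
          simp only [hPdef, mem_filter, mem_univ, true_and]
          refine ⟨⟨?_, ?_⟩, trivial⟩
          · intro hcon
            apply hz.2
            have := hN.conj_mem _ hcon a
            simpa [mul_assoc] using this
          · have : a * (a⁻¹ * z * a) * a⁻¹ = z := by group
            rw [this]; exact hz.1
      rw [Finset.sum_congr rfl (fun a _ => hfib a)]
      simp [Finset.card_univ, mul_comm]
    have hPfst : P.card = ∑ g0 : G, (A g0).card := by
      rw [Finset.card_eq_sum_card_fiberwise (f := Prod.fst) (t := univ)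
        (fun x _ => mem_univ _)]
      refine Finset.sum_congr rfl ?_
      intro g0 _
      apply Finset.card_bij (fun (p : G × G) _ => p.2)
      · intro p hp
        simp only [hPdef, mem_filter, mem_univ, true_and] at hp
        obtain ⟨⟨hp1, hp2⟩, hpg⟩ := hp
        subst hpg
        simp only [hAdef, mem_filter, mem_univ, true_and]
        exact ⟨hp1, hp2⟩
      · intro p hp q hq heq
        simp only [hPdef, mem_filter, mem_univ, true_and] at hp hq
        exact Prod.ext (hp.2.trans hq.2.symm) heq
      · intro a ha
        simp only [hAdef, mem_filter, mem_univ, true_and] at ha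
        exact ⟨(g0, a), by simp [hPdef, ha.1, ha.2], rfl⟩
    have hA1 : ∀ g0 : G, g0 ∉ N → hHc ≤ (A g0).card := by
      intro g0 hg0
      obtain ⟨h0, hh0, hcj0⟩ := hconj g0 hg0
      obtain ⟨d, hd⟩ := isConj_iff.mp hcj0
      rw [hHdef]
      apply Finset.card_le_card_of_injOn (fun k => k * d)
      · intro k hk
        simp only [Finset.mem_coe, mem_filter, mem_univ, true_and] at hk
        simp only [Finset.mem_coe, hAdef, mem_filter, mem_univ, true_and]
        refine ⟨hg0, ?_⟩
        have e : (k * d) * g0 * (k * d)⁻¹ = k * (d * g0 * d⁻¹) * k⁻¹ := by group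
        rw [e, hd]
        exact H.mul_mem (H.mul_mem hk hh0) (H.inv_mem hk)
      · intro a _ b _ hab
        exact mul_right_cancel hab
    have hA2 : hHc + hHc ≤ (A h').card := by
      set B := (univ.filter (· ∈ H)) ∪ (univ.filter (· ∈ H)).image (fun k => k * y)
        with hBdef
      have hdisj : Disjoint (univ.filter (· ∈ H))
          ((univ.filter (· ∈ H)).image (fun k => k * y)) := by
        rw [Finset.disjoint_left]
        intro z hz hz2
        simp only [mem_filter, mem_univ, true_and] at hz
        simp only [Finset.mem_image, mem_filter, mem_univ, true_and] at hz2
        obtain ⟨k, hk, rfl⟩ := hz2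
        have hyH : y ∈ H := by
          have := H.mul_mem (H.inv_mem hk) hz
          simpa [mul_assoc] using this
        have : y ∈ H ⊓ M := ⟨hyH, hyM⟩
        rw [hHMcap, Subgroup.mem_bot] at this
        exact hy1 this
      have hBcard : B.card = hHc + hHc := by
        rw [hBdef, Finset.card_union_of_disjoint hdisj,
          Finset.card_image_of_injective _ (fun a b hab => mul_right_cancel hab)]
      have hBsub : B ⊆ A h' := by
        intro z hz
        rw [hBdef, Finset.mem_union] at hz
        simp only [hAdef, mem_filter, mem_univ, true_and]
        refine ⟨hh'N, ?_⟩
        rcases hz with hz | hz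
        · simp only [mem_filter, mem_univ, true_and] at hz
          exact H.mul_mem (H.mul_mem hz hh'H) (H.inv_mem hz)
        · simp only [Finset.mem_image, mem_filter, mem_univ, true_and] at hz
          obtain ⟨k, hk, rfl⟩ := hz
          have e : (k * y) * h' * (k * y)⁻¹ = k * (y * h' * y⁻¹) * k⁻¹ := by group
          rw [e, hcomm]
          exact H.mul_mem (H.mul_mem hk hh'H) (H.inv_mem hk)
      calc hHc + hHc = B.card := hBcard.symm
      _ ≤ (A h').card := Finset.card_le_card hBsub
    have hHc_pos : 0 < hHc := by
      rw [hHdef]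
      apply Finset.card_pos.mpr
      exact ⟨1, by simp [H.one_mem]⟩
    have hstrict : s * hHc < ∑ g0 ∈ univ.filter (fun z : G => z ∉ N), (A g0).card := by
      have e : s * hHc = ∑ _g0 ∈ univ.filter (fun z : G => z ∉ N), hHc := by
        rw [Finset.sum_const, hsdef, smul_eq_mul]
      rw [e]
      apply Finset.sum_lt_sum
      · intro i hi
        simp only [mem_filter, mem_univ, true_and] at hi
        exact hA1 i hi
      · refine ⟨h', by simp [hh'N], ?_⟩
        calc hHc < hHc + hHc := by omega
        _ ≤ (A h').card := hA2
    have hsum_le : ∑ g0 ∈ univ.filter (fun z : G => z ∉ N), (A g0).card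
        ≤ ∑ g0 : G, (A g0).card :=
      Finset.sum_le_sum_of_subset (Finset.subset_univ _)
    have hfinal : s * hHc < Fintype.card G * t := by
      calc s * hHc < ∑ g0 ∈ univ.filter (fun z : G => z ∉ N), (A g0).card := hstrict
      _ ≤ ∑ g0 : G, (A g0).card := hsum_le
      _ = P.card := hPfst.symm
      _ = Fintype.card G * t := hPsnd
    rw [hG, hs_tm] at hfinal
    have : t * m * hHc = hHc * m * t := by ring
    omega
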